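/- arXiv:2006.01393 — 2 statements merged into one kernel-verified Lean document; each statement's English description precedes it below -/
import Mathlib

section
/- Let α = α_s + α_t with α_s, α_t ∈ (0,1). Suppose that for every subset B ⊆ {1,…,L} with B* ⊆ B: (i) the pretest passes with probability at least 1 − α_s, i.e. P(Ω ∖ S_B) ≤ α_s, and (ii) P({ω : β* ∈ C_B(ω)}) ≥ 1 − α_t. Then the pretested union confidence region has coverage at least 1 − α: P({ω : there exists B ⊆ {1,…,L} with |B| = s̄ − 1, ω ∈ S_B, and β* ∈ C_B(ω)}) ≥ 1 − α. -/
open MeasureTheory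

/-- The pretested union confidence interval has coverage at least
`1 - α` where `α = αs + αt`. -/
theorem pretested_union_ci_coverage
    {Ω : Type*} [MeasurableSpace Ω] (P : Measure Ω) [IsProbabilityMeasure P]
    (L : ℕ) (hL : 1 ≤ L) (βstar : ℝ)
    (α αs αt : ℝ) (hα0 : 0 < α) (hα1 : α < 1)
    (hαs0 : 0 < αs) (hαs1 : αs < 1) (hαt0 : 0 < αt) (hαt1 : αt < 1)
    (hsum : α = αs + αt)
    (sbar : ℕ) (hs1 : 1 ≤ sbar) (hsL : sbar ≤ L)
    (Bstar : Finset (Fin L)) (hBstar : Bstar.card < sbar)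
    (C : Finset (Fin L) → Ω → Set ℝ)
    (hmeas : ∀ B : Finset (Fin L), MeasurableSet {ω | βstar ∈ C B ω})
    (S : Finset (Fin L) → Set Ω)
    (hSmeas : ∀ B : Finset (Fin L), MeasurableSet (S B))
    (hpre : ∀ B : Finset (Fin L), Bstar ⊆ B → P (S B)ᶜ ≤ ENNReal.ofReal αs)
    (hcov : ∀ B : Finset (Fin L), Bstar ⊆ B →
      ENNReal.ofReal (1 - αt) ≤ P {ω | βstar ∈ C B ω}) :
    ENNReal.ofReal (1 - α) ≤
      P {ω | ∃ B : Finset (Fin L), B.card = sbar - 1 ∧ ω ∈ S B ∧ βstar ∈ C B ω} := by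
  -- extend Bstar to a set of cardinality sbar - 1
  obtain ⟨B0, hB0sub, hB0card⟩ : ∃ B0, Bstar ⊆ B0 ∧ B0.card = sbar - 1 := by
    apply Finset.exists_superset_card_eq (Nat.le_sub_one_of_lt hBstar)
    simpa using le_trans (Nat.sub_le sbar 1) hsL
  set E := S B0 ∩ {ω | βstar ∈ C B0 ω} with hE
  have hEmeas : MeasurableSet E := (hSmeas B0).inter (hmeas B0)
  have hsub : E ⊆ {ω | ∃ B : Finset (Fin L), B.card = sbar - 1 ∧ ω ∈ S B ∧ βstar ∈ C B ω} := by
    rintro ω ⟨h1, h2⟩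
    exact ⟨B0, hB0card, h1, h2⟩
  refine le_trans ?_ (measure_mono hsub)
  -- bound on complement of the coverage event
  have hCc : P {ω | βstar ∈ C B0 ω}ᶜ ≤ ENNReal.ofReal αt := by
    have h1 : P {ω | βstar ∈ C B0 ω} + P {ω | βstar ∈ C B0 ω}ᶜ = 1 :=
      prob_add_prob_compl (hmeas B0)
    have h2 := hcov B0 hB0sub
    have h3 : ENNReal.ofReal (1 - αt) + P {ω | βstar ∈ C B0 ω}ᶜ ≤ 1 := by
      calc ENNReal.ofReal (1 - αt) + P {ω | βstar ∈ C B0 ω}ᶜ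
          ≤ P {ω | βstar ∈ C B0 ω} + P {ω | βstar ∈ C B0 ω}ᶜ := add_le_add_left h2 _
        _ = 1 := h1
    have h4 : ENNReal.ofReal (1 - αt) + ENNReal.ofReal αt = 1 := by
      rw [← ENNReal.ofReal_add (by linarith) (le_of_lt hαt0)]
      norm_num
    rw [← h4] at h3
    exact (ENNReal.add_le_add_iff_left ENNReal.ofReal_ne_top).mp h3
  have hEc : P Eᶜ ≤ ENNReal.ofReal α := by
    have : P Eᶜ ≤ P (S B0)ᶜ + P {ω | βstar ∈ C B0 ω}ᶜ := by
      rw [hE, Set.compl_inter]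
      exact measure_union_le _ _
    calc P Eᶜ ≤ P (S B0)ᶜ + P {ω | βstar ∈ C B0 ω}ᶜ := this
      _ ≤ ENNReal.ofReal αs + ENNReal.ofReal αt := add_le_add (hpre B0 hB0sub) hCc
      _ = ENNReal.ofReal α := by
          rw [← ENNReal.ofReal_add (le_of_lt hαs0) (le_of_lt hαt0), hsum]
  have h1 : P E + P Eᶜ = 1 := prob_add_prob_compl hEmeas
  have : ENNReal.ofReal (1 - α) + ENNReal.ofReal α ≤ P E + ENNReal.ofReal α := by
    have h4 : ENNReal.ofReal (1 - α) + ENNReal.ofReal α = 1 := by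
      rw [← ENNReal.ofReal_add (by linarith) (le_of_lt hα0)]
      norm_num
    rw [h4, ← h1]
    exact add_le_add_right hEc _
  exact (ENNReal.add_le_add_iff_right ENNReal.ofReal_ne_top).mp this
end

section
/- For any two nonempty subsets V, V' ⊆ {1,…,L} with |V| = |V'|, the random variables M_V = min_{j ∈ V} Σ_{k=1}^L W_{jk} and M_{V'} = min_{j ∈ V'} Σ_{k=1}^L W_{jk} have the same distribution (the laws P ∘ M_V⁻¹ and P ∘ M_{V'}⁻¹ on ℝ coincide). In other words, the distribution of the minimum row-sum statistic over a set of valid instruments depends only on the number of valid instruments, not on which instruments are valid. -/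
open MeasureTheory ProbabilityTheory

/-- Equiv on `Sym2` induced by an equiv. -/
def sym2EquivOf {α β : Type*} (σ : α ≃ β) : Sym2 α ≃ Sym2 β where
  toFun := Sym2.map σ
  invFun := Sym2.map σ.symm
  left_inv := by intro z; induction z using Sym2.ind; simp
  right_inv := by intro z; induction z using Sym2.ind; simp

lemma measurable_finset_inf' {ι α : Type*} [MeasurableSpace α] {s : Finset ι}
    (hs : s.Nonempty) (f : ι → α → ℝ) (hf : ∀ i, Measurable (f i)) :
    Measurable fun a => s.inf' hs fun i => f i a := by
  induction hs using Finset.Nonempty.cons_induction with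
  | singleton i => simp only [Finset.inf'_singleton]; exact hf i
  | cons i s hi hs ih =>
      have : (fun a => (Finset.cons i s hi).inf' (Finset.cons_nonempty hi) fun j => f j a)
          = fun a => f i a ⊓ s.inf' hs fun j => f j a := by
        funext a; exact Finset.inf'_cons (H := hs) (f := fun j => f j a)
      rw [this]
      exact (hf i).inf ih

lemma joint_law_pi {Ω ι : Type*} [MeasurableSpace Ω] [Fintype ι]
    (P : Measure Ω) [IsProbabilityMeasure P] (ν : Measure ℝ) [IsProbabilityMeasure ν]
    (U : ι → Ω → ℝ) (hmeas : ∀ e, Measurable (U e))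
    (hindep : iIndepFun U P)
    (hdist : ∀ e, P.map (U e) = ν) :
    P.map (fun ω e => U e ω) = Measure.pi fun _ => ν := by
  refine (Measure.pi_eq (μ := fun _ : ι => ν) fun s hs => ?_).symm
  rw [Measure.map_apply (measurable_pi_lambda _ hmeas)
    (MeasurableSet.univ_pi fun i => hs i)]
  have : (fun ω e => U e ω) ⁻¹' Set.pi Set.univ s = ⋂ i ∈ Finset.univ, U i ⁻¹' s i := by
    ext ω; simp [Set.mem_pi]
  rw [this, hindep.measure_inter_preimage_eq_mul Finset.univ (sets := s) (fun i _ => hs i)]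
  refine Finset.prod_congr rfl fun i _ => ?_
  rw [← hdist i, Measure.map_apply (hmeas i) (hs i)]

/-- The distribution of the minimum row-sum statistic of an i.i.d. symmetric
random array over a set of valid instruments depends only on the number of
valid instruments, not on which instruments are valid. -/
theorem min_row_sum_distribution_invariant
    {Ω : Type*} [MeasurableSpace Ω] (P : Measure Ω) [IsProbabilityMeasure P]
    (L : ℕ) (hL : 1 ≤ L) (ν : Measure ℝ) [IsProbabilityMeasure ν]
    (U : Sym2 (Fin L) → Ω → ℝ)
    (hmeas : ∀ e, Measurable (U e))
    (hindep : iIndepFun U P)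
    (hdist : ∀ e, P.map (U e) = ν)
    (W : Fin L → Fin L → Ω → ℝ) (hW : ∀ j k, W j k = U s(j, k))
    (V V' : Finset (Fin L)) (hV : V.Nonempty) (hV' : V'.Nonempty)
    (hcard : V.card = V'.card) :
    P.map (fun ω => V.inf' hV fun j => ∑ k, W j k ω) =
      P.map (fun ω => V'.inf' hV' fun j => ∑ k, W j k ω) := by
  classical
  -- a permutation sending V' onto V
  have hc1 : Fintype.card {x // x ∈ V'} = Fintype.card {x // x ∈ V} := by
    simp [Fintype.card_coe, hcard]
  have hc2 : Fintype.card {x // ¬ x ∈ V'} = Fintype.card {x // ¬ x ∈ V} := by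
    rw [Fintype.card_subtype_compl, Fintype.card_subtype_compl, hc1]
  set σ : Equiv.Perm (Fin L) :=
    Equiv.subtypeCongr (Fintype.equivOfCardEq hc1) (Fintype.equivOfCardEq hc2) with hσ
  have hmem : ∀ x, x ∈ V' → σ x ∈ V := by
    intro x hx
    have : σ x = ((Fintype.equivOfCardEq hc1) ⟨x, hx⟩ : Fin L) := by
      simp [hσ, Equiv.subtypeCongr, Equiv.sumCompl_symm_apply_of_pos hx]
    rw [this]; exact ((Fintype.equivOfCardEq hc1) ⟨x, hx⟩).2
  have hσV : V'.image σ = V := by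
    apply Finset.eq_of_subset_of_card_le
    · exact Finset.image_subset_iff.mpr hmem
    · rw [Finset.card_image_of_injective _ σ.injective, ← hcard]
  -- equivalence on Sym2 and the induced measurable equiv on products
  set τ : Sym2 (Fin L) ≃ Sym2 (Fin L) := sym2EquivOf σ with hτ
  set T := MeasurableEquiv.piCongrLeft (fun _ : Sym2 (Fin L) => ℝ) τ with hTdef
  have hT : MeasurePreserving T (Measure.pi fun _ => ν) (Measure.pi fun _ => ν) :=
    MeasureTheory.measurePreserving_piCongrLeft (α := fun _ : Sym2 (Fin L) => ℝ) (fun _ => ν) τ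
  have hTu : ∀ (u : Sym2 (Fin L) → ℝ) b, T u b = u (τ.symm b) := by
    intro u b
    conv_lhs => rw [← τ.apply_symm_apply b]
    exact MeasurableEquiv.piCongrLeft_apply_apply (β := fun _ : Sym2 (Fin L) => ℝ) τ u (τ.symm b)
  -- the statistic as a function of the joint array
  set F : ∀ (S : Finset (Fin L)), S.Nonempty → (Sym2 (Fin L) → ℝ) → ℝ :=
    fun S hS u => S.inf' hS fun j => ∑ k, u s(j, k) with hFdef
  have hFmeas : ∀ S hS, Measurable (F S hS) := by
    intro S hS
    exact measurable_finset_inf' hS _ fun j =>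
      Finset.measurable_sum _ fun k _ => measurable_pi_apply _
  have hjoint : Measurable fun ω (e : Sym2 (Fin L)) => U e ω :=
    measurable_pi_lambda _ hmeas
  have hlaw : P.map (fun ω e => U e ω) = Measure.pi fun _ => ν :=
    joint_law_pi P ν U hmeas hindep hdist
  have h1 : (fun ω => V.inf' hV fun j => ∑ k, W j k ω)
      = (F V hV) ∘ (fun ω e => U e ω) := by
    funext ω; simp [hFdef, hW, Function.comp]
  have h2 : (fun ω => V'.inf' hV' fun j => ∑ k, W j k ω)
      = (F V' hV') ∘ (fun ω e => U e ω) := by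
    funext ω; simp [hFdef, hW, Function.comp]
  rw [h1, h2, ← Measure.map_map (hFmeas V hV) hjoint,
    ← Measure.map_map (hFmeas V' hV') hjoint, hlaw]
  -- reduce to invariance of the product measure
  conv_lhs => rw [← hT.map_eq]
  rw [Measure.map_map (hFmeas V hV) hT.measurable]
  congr 1
  funext u
  have key : ∀ j k, T u s(j, k) = u s(σ.symm j, σ.symm k) := by
    intro j k
    rw [hTu]
    congr 1
  simp only [Function.comp_apply, hFdef]
  have hrow : ∀ j : Fin L, (∑ k, T u s(j, k)) = ∑ k, u s(σ.symm j, k) := by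
    intro j
    simp_rw [key]
    exact Equiv.sum_comp σ.symm fun k => u s(σ.symm j, k)
  calc V.inf' hV (fun j => ∑ k, T u s(j, k))
      = V.inf' hV (fun j => ∑ k, u s(σ.symm j, k)) := by
        apply Finset.inf'_congr _ rfl; intro j _; exact hrow j
    _ = (V'.image σ).inf' (hσV.symm ▸ hV) (fun j => ∑ k, u s((Equiv.symm σ) j, k)) :=
        Finset.inf'_congr hV hσV.symm (fun _ _ => rfl)
    _ = V'.inf' ((hσV.symm ▸ hV : (V'.image σ).Nonempty)).of_image
          ((fun j => ∑ k, u s((Equiv.symm σ) j, k)) ∘ σ) :=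
        Finset.inf'_image _ _
    _ = V'.inf' hV' (fun j => ∑ k, u s(j, k)) := by
        apply Finset.inf'_congr _ rfl
        intro j _
        simp
end
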